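/- Let Z ⊂ ℝᵐ₊ be a nonempty convex compact set containing a positive vector, φ(r) = max_{z∈Z} zᵀr, π(h) = sqrt(φ([h]²)) with [h]² the entrywise square, and κ = 6 ln(2√3 m²). Let Θ ∈ S^m with Θ ⪰ 0, Θ ≠ 0, and μ > 0 satisfy κ·φ(diag(Θ)) ≤ μ. Write Θ = QQᵀ with an m×m matrix Q, let V be an m×m orthogonal matrix with all entries of magnitude at most sqrt(2/m), χ a Rademacher random vector, λ = (μ/m)[1;…;1] ∈ ℝᵐ, and H_χ = sqrt(m/μ)·Q Diag(χ) V. Then (a) H_χ Diag(λ) H_χᵀ = Θ for every realization of χ, with λ ≥ 0 and Σᵢ λᵢ = μ; and (b) the probability that π(Col_ℓ[H_χ]) ≤ 1 for all ℓ ≤ m is at least 1/2. -/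

import Mathlib

open MeasureTheory Matrix
open scoped ENNReal

/-- Support function `φ(r) = max_{z ∈ Z} zᵀr` of a set `Z ⊆ ℝᵐ`, as a supremum. -/
noncomputable def suppFn {m : ℕ} (Z : Set (Fin m → ℝ)) (r : Fin m → ℝ) : ℝ :=
  sSup ((fun z => z ⬝ᵥ r) '' Z)

/-- Lemma on randomized contrast generation: with
`κ = 6 ln(2√3 m²)`, `Θ = QQᵀ ⪰ 0`, `Θ ≠ 0`, `μ > 0`, `κ φ(diag Θ) ≤ μ`,
`λ = (μ/m)𝟙`, `H_χ = √(m/μ) Q Diag(χ) V` with `χ` Rademacher and `V`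
orthogonal with entries of magnitude ≤ `√(2/m)`:
(a) `H_χ Diag(λ) H_χᵀ = Θ` always, `λ ≥ 0`, `Σᵢ λᵢ = μ`;
(b) with probability ≥ 1/2 all columns of `H_χ` satisfy `π(·) ≤ 1`. -/

lemma sum_exp_signs (m : ℕ) (b : Fin m → ℝ) :
    ∑ χ : Fin m → Bool, Real.exp (∑ k, b k * (if χ k then 1 else -1)) =
      ∏ k, (Real.exp (b k) + Real.exp (-(b k))) := by
  have h1 : ∀ χ : Fin m → Bool, Real.exp (∑ k, b k * (if χ k then 1 else -1)) =
      ∏ k, Real.exp (b k * (if χ k then 1 else -1)) := fun χ => Real.exp_sum _ _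
  simp_rw [h1]
  have h2 := Finset.prod_univ_sum (fun _ : Fin m => (Finset.univ : Finset Bool))
    (fun k c => Real.exp (b k * (if c then 1 else -1)))
  rw [Fintype.piFinset_univ] at h2
  rw [← h2]
  congr 1; ext k
  rw [Fintype.sum_bool]
  norm_num

lemma prod_cosh_le (m : ℕ) (b : Fin m → ℝ) :
    ∏ k, (Real.exp (b k) + Real.exp (-(b k))) ≤ 2 ^ m * Real.exp (∑ k, (b k) ^ 2 / 2) := by
  calc ∏ k, (Real.exp (b k) + Real.exp (-(b k)))
      ≤ ∏ k, 2 * Real.exp ((b k) ^ 2 / 2) := by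
        apply Finset.prod_le_prod
        · intro k _; positivity
        · intro k _
          have := Real.cosh_le_exp_half_sq (b k)
          rw [Real.cosh_eq] at this
          linarith
    _ = 2 ^ m * Real.exp (∑ k, (b k) ^ 2 / 2) := by
        rw [Finset.prod_mul_distrib, ← Real.exp_sum]
        simp [Finset.prod_const]

lemma count_one_sided (m : ℕ) (a : Fin m → ℝ) (t v : ℝ) (ht : 0 ≤ t) (hv : 0 < v)
    (hav : ∑ k, (a k) ^ 2 ≤ v) :
    ((Finset.univ.filter fun χ : Fin m → Bool =>
        t < ∑ k, a k * (if χ k then 1 else -1)).card : ℝ) ≤ 2 ^ m * Real.exp (-(t^2/(2*v))) := by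
  set s := t / v with hs
  have hs0 : 0 ≤ s := div_nonneg ht hv.le
  set F := Finset.univ.filter fun χ : Fin m → Bool => t < ∑ k, a k * (if χ k then 1 else -1)
  have key : (F.card : ℝ) * Real.exp (s * t) ≤ 2 ^ m * Real.exp (s ^ 2 * v / 2) := by
    have step1 : (F.card : ℝ) * Real.exp (s * t) ≤
        ∑ χ ∈ F, Real.exp (s * ∑ k, a k * (if χ k then 1 else -1)) := by
      have h := Finset.card_nsmul_le_sum F
        (fun χ => Real.exp (s * ∑ k, a k * (if χ k then 1 else -1))) (Real.exp (s * t))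
        (fun χ hχ => by
          have hmem := (Finset.mem_filter.1 hχ).2
          exact Real.exp_le_exp.2 (mul_le_mul_of_nonneg_left hmem.le hs0))
      rwa [nsmul_eq_mul] at h
    have step2 : ∑ χ ∈ F, Real.exp (s * ∑ k, a k * (if χ k then 1 else -1)) ≤
        ∑ χ : Fin m → Bool, Real.exp (∑ k, (s * a k) * (if χ k then 1 else -1)) := by
      have : ∀ χ : Fin m → Bool, s * ∑ k, a k * (if χ k then 1 else -1) =
          ∑ k, (s * a k) * (if χ k then 1 else -1) := by
        intro χ; rw [Finset.mul_sum]; congr 1; ext k; ring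
      simp_rw [this]
      exact Finset.sum_le_sum_of_subset_of_nonneg (Finset.subset_univ F)
        (fun χ _ _ => (Real.exp_pos _).le)
    have step3 := (sum_exp_signs m (fun k => s * a k)).le
    have step4 := prod_cosh_le m (fun k => s * a k)
    have step5 : Real.exp (∑ k, (s * a k) ^ 2 / 2) ≤ Real.exp (s ^ 2 * v / 2) := by
      apply Real.exp_le_exp.2
      have : ∑ k, (s * a k) ^ 2 / 2 = s ^ 2 * (∑ k, (a k) ^ 2) / 2 := by
        rw [Finset.mul_sum, Finset.sum_div]; congr 1; ext k; ring
      rw [this]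
      have := sq_nonneg s
      nlinarith
    calc (F.card : ℝ) * Real.exp (s * t) ≤ _ := step1
      _ ≤ _ := step2
      _ = _ := sum_exp_signs m (fun k => s * a k)
      _ ≤ _ := step4
      _ ≤ 2 ^ m * Real.exp (s ^ 2 * v / 2) := by
          have h2 : (0:ℝ) ≤ 2 ^ m := by positivity
          exact mul_le_mul_of_nonneg_left step5 h2
  have heq : (2:ℝ) ^ m * Real.exp (-(t^2/(2*v))) * Real.exp (s * t) =
      2 ^ m * Real.exp (s ^ 2 * v / 2) := by
    rw [mul_assoc, ← Real.exp_add]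
    congr 2
    rw [hs]
    field_simp
    ring
  exact le_of_mul_le_mul_right (key.trans_eq heq.symm) (Real.exp_pos _)

lemma count_two_sided (m : ℕ) (a : Fin m → ℝ) (t v : ℝ) (ht : 0 ≤ t) (hv : 0 < v)
    (hav : ∑ k, (a k) ^ 2 ≤ v) :
    ((Finset.univ.filter fun χ : Fin m → Bool =>
        t < |∑ k, a k * (if χ k then 1 else -1)|).card : ℝ) ≤
      2 ^ m * (2 * Real.exp (-(t^2/(2*v)))) := by
  have hsub : (Finset.univ.filter fun χ : Fin m → Bool =>
        t < |∑ k, a k * (if χ k then 1 else -1)|) ⊆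
      (Finset.univ.filter fun χ : Fin m → Bool =>
        t < ∑ k, a k * (if χ k then 1 else -1)) ∪
      (Finset.univ.filter fun χ : Fin m → Bool =>
        t < ∑ k, (-(a k)) * (if χ k then 1 else -1)) := by
    intro χ hχ
    have h := (Finset.mem_filter.1 hχ).2
    rcases lt_abs.mp h with h1 | h1
    · exact Finset.mem_union_left _ (Finset.mem_filter.2 ⟨Finset.mem_univ _, h1⟩)
    · refine Finset.mem_union_right _ (Finset.mem_filter.2 ⟨Finset.mem_univ _, ?_⟩)
      calc t < -∑ k, a k * (if χ k then 1 else -1) := h1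
        _ = ∑ k, (-(a k)) * (if χ k then 1 else -1) := by
            rw [← Finset.sum_neg_distrib]; congr 1; ext k; ring
  have h1 := count_one_sided m a t v ht hv hav
  have h2 := count_one_sided m (fun k => -(a k)) t v ht hv (by simpa using hav)
  calc ((Finset.univ.filter fun χ : Fin m → Bool =>
        t < |∑ k, a k * (if χ k then 1 else -1)|).card : ℝ)
      ≤ ((Finset.univ.filter fun χ : Fin m → Bool =>
          t < ∑ k, a k * (if χ k then 1 else -1)).card : ℝ) +
        ((Finset.univ.filter fun χ : Fin m → Bool =>
          t < ∑ k, (-(a k)) * (if χ k then 1 else -1)).card : ℝ) := by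
        have h := (Finset.card_le_card hsub).trans (Finset.card_union_le _ _)
        exact_mod_cast h
    _ ≤ 2 ^ m * Real.exp (-(t^2/(2*v))) + 2 ^ m * Real.exp (-(t^2/(2*v))) := add_le_add h1 h2
    _ = 2 ^ m * (2 * Real.exp (-(t^2/(2*v)))) := by ring

open scoped ENNReal

lemma pi_uniform_singleton (m : ℕ) (χ : Fin m → Bool) :
    (Measure.pi fun _ : Fin m => (PMF.uniformOfFintype Bool).toMeasure) {χ} =
      (2 : ℝ≥0∞)⁻¹ ^ m := by
  rw [← Set.univ_pi_singleton χ, Measure.pi_pi]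
  have : ∀ i : Fin m, (PMF.uniformOfFintype Bool).toMeasure {χ i} = (2 : ℝ≥0∞)⁻¹ := by
    intro i
    rw [PMF.toMeasure_apply_singleton _ _ (measurableSet_singleton _),
      PMF.uniformOfFintype_apply]
    simp
  simp [this]

lemma pi_uniform_count (m : ℕ) (A : Set (Fin m → Bool)) :
    (Measure.pi fun _ : Fin m => (PMF.uniformOfFintype Bool).toMeasure) A =
      ((Set.toFinite A).toFinset.card : ℝ≥0∞) * (2 : ℝ≥0∞)⁻¹ ^ m := by
  classical
  have hA : A = ⋃ x ∈ (Set.toFinite A).toFinset, ({x} : Set (Fin m → Bool)) := by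
    ext y; simp [Set.Finite.mem_toFinset]
  rw [hA, measure_biUnion_finset ?_ (fun x _ => measurableSet_singleton x)]
  · simp_rw [pi_uniform_singleton]
    rw [Finset.sum_const, nsmul_eq_mul]
    congr 3
    exact Set.Finite.toFinset_inj.mpr hA
  · intro x _ y _ hxy
    simp [Function.onFun, Set.disjoint_singleton, hxy]

set_option maxHeartbeats 2000000 in
theorem stmt8
    {m : ℕ} (hm : 0 < m)
    (Z : Set (Fin m → ℝ)) (hZne : Z.Nonempty) (hZconv : Convex ℝ Z)
    (hZcomp : IsCompact Z) (hZnonneg : ∀ z ∈ Z, ∀ i, 0 ≤ z i)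
    (hZpos : ∃ z ∈ Z, ∀ i, 0 < z i)
    (κ : ℝ) (hκ : κ = 6 * Real.log (2 * Real.sqrt 3 * m ^ 2))
    (Θ : Matrix (Fin m) (Fin m) ℝ) (hΘ : Θ.PosSemidef) (hΘ0 : Θ ≠ 0)
    (μ : ℝ) (hμ : 0 < μ)
    (hκΘμ : κ * suppFn Z (fun i => Θ i i) ≤ μ)
    (Q : Matrix (Fin m) (Fin m) ℝ) (hQ : Θ = Q * Qᵀ)
    (V : Matrix (Fin m) (Fin m) ℝ)
    (hV_orth : Vᵀ * V = 1)
    (hV_ent : ∀ k j, |V k j| ≤ Real.sqrt (2 / m))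
    (lam : Fin m → ℝ) (hlam : lam = fun _ => μ / m)
    (Hχ : (Fin m → Bool) → Matrix (Fin m) (Fin m) ℝ)
    (hHχ : ∀ χ, Hχ χ = Real.sqrt (m / μ) •
      (Q * Matrix.diagonal (fun k => if χ k then (1 : ℝ) else -1) * V))
    (P : Measure (Fin m → Bool))
    (hP : P = Measure.pi fun _ => (PMF.uniformOfFintype Bool).toMeasure) :
    (∀ χ : Fin m → Bool, Hχ χ * Matrix.diagonal lam * (Hχ χ)ᵀ = Θ) ∧
    (∀ i, 0 ≤ lam i) ∧ (∑ i, lam i = μ) ∧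
    (1 / 2 : ℝ≥0∞) ≤
      P {χ | ∀ ℓ : Fin m, Real.sqrt (suppFn Z (fun i => (Hχ χ i ℓ) ^ 2)) ≤ 1} := by
  have hm' : (0:ℝ) < m := by exact_mod_cast hm
  have hmne : (m:ℝ) ≠ 0 := ne_of_gt hm'
  refine ⟨?_, ?_, ?_, ?_⟩
  · -- part (a) identity
    intro χ
    rw [hHχ, hlam]
    have hD : (Matrix.diagonal fun k => if χ k then (1:ℝ) else -1) *
        (Matrix.diagonal fun k => if χ k then (1:ℝ) else -1) = 1 := by
      rw [Matrix.diagonal_mul_diagonal]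
      have : (fun k => (if χ k then (1:ℝ) else -1) * (if χ k then (1:ℝ) else -1)) =
          fun _ => (1:ℝ) := by ext k; by_cases h : χ k <;> simp [h]
      rw [this, Matrix.diagonal_one]
    have hVV : V * Vᵀ = 1 := mul_eq_one_comm.mp hV_orth
    have hdiag : Matrix.diagonal (fun _ : Fin m => μ/m) =
        (μ/m) • (1 : Matrix (Fin m) (Fin m) ℝ) := by
      ext i j
      by_cases h : i = j <;> simp [Matrix.diagonal_apply, Matrix.one_apply, h]
    rw [hdiag]
    set D := Matrix.diagonal fun k => if χ k then (1:ℝ) else -1 with hDdef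
    have hc2 : Real.sqrt (m/μ) * Real.sqrt (m/μ) = m/μ :=
      Real.mul_self_sqrt (by positivity)
    simp only [Matrix.transpose_smul, Matrix.transpose_mul, Matrix.diagonal_transpose,
      ← hDdef, Matrix.smul_mul, Matrix.mul_smul, smul_smul, Matrix.mul_one]
    have hmat : Q * D * V * (Vᵀ * (D * Qᵀ)) = Θ := by
      have e1 : Q * D * V * (Vᵀ * (D * Qᵀ)) = (Q * D) * (V * Vᵀ) * (D * Qᵀ) := by
        noncomm_ring
      rw [e1, hVV, Matrix.mul_one]
      have e2 : Q * D * (D * Qᵀ) = Q * (D * D) * Qᵀ := by noncomm_ring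
      rw [e2, hD, Matrix.mul_one]
      exact hQ.symm
    have hDT : Dᵀ = D := Matrix.diagonal_transpose _
    rw [hDT, hmat]
    have : Real.sqrt (m/μ) * (μ/m * Real.sqrt (m/μ)) = 1 := by
      rw [mul_comm (μ/m), ← mul_assoc, hc2]
      field_simp
    rw [this, one_smul]
  · intro i; rw [hlam]; positivity
  · rw [hlam]
    rw [Finset.sum_const, Finset.card_univ, Fintype.card_fin, nsmul_eq_mul]
    field_simp
  · -- part (b)
    subst hP
    have hμne : μ ≠ 0 := ne_of_gt hμ
    have hs3 : (1:ℝ) ≤ Real.sqrt 3 := by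
      rw [show (1:ℝ) = Real.sqrt 1 from Real.sqrt_one.symm]
      exact Real.sqrt_le_sqrt (by norm_num)
    have hm1 : (1:ℝ) ≤ m := by exact_mod_cast hm
    have hc0 : (1:ℝ) < 2 * Real.sqrt 3 * m ^ 2 := by nlinarith
    have hκpos : 0 < κ := by
      rw [hκ]; have := Real.log_pos hc0; linarith
    have hdiagQ : ∀ i, Θ i i = ∑ k, (Q i k) ^ 2 := by
      intro i; rw [hQ]
      simp [Matrix.mul_apply, Matrix.transpose_apply, sq]
    have hΘd : ∀ i, 0 ≤ Θ i i := fun i =>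
      (hdiagQ i) ▸ Finset.sum_nonneg fun k _ => sq_nonneg _
    set S : (Fin m → Bool) → Fin m → Fin m → ℝ :=
      fun χ i ℓ => ∑ k, (Q i k * V k ℓ) * (if χ k then 1 else -1) with hSdef
    set t : Fin m → ℝ := fun i => Real.sqrt (κ / m * Θ i i) with htdef
    have hent : ∀ χ i ℓ, Hχ χ i ℓ = Real.sqrt (m/μ) * S χ i ℓ := by
      intro χ i ℓ
      rw [hHχ]
      simp only [Matrix.smul_apply, smul_eq_mul]
      congr 1
      rw [Matrix.mul_apply]
      apply Finset.sum_congr rfl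
      intro k _
      rw [Matrix.mul_diagonal]
      ring
    -- the good event implies membership in the target set
    have hEG : ∀ χ : Fin m → Bool, (∀ i ℓ, |S χ i ℓ| ≤ t i) →
        ∀ ℓ : Fin m, Real.sqrt (suppFn Z fun i => (Hχ χ i ℓ)^2) ≤ 1 := by
      intro χ hχ ℓ
      have hle : suppFn Z (fun i => (Hχ χ i ℓ)^2) ≤ 1 := by
        apply csSup_le (hZne.image _)
        rintro y ⟨z, hz, rfl⟩
        have hzr : (fun z => z ⬝ᵥ (fun i => (Hχ χ i ℓ)^2)) z ≤
            (κ/μ) * (z ⬝ᵥ fun i => Θ i i) := by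
          simp only [dotProduct]
          rw [Finset.mul_sum]
          apply Finset.sum_le_sum
          intro i _
          have h1 : (Hχ χ i ℓ)^2 ≤ (κ/μ) * Θ i i := by
            rw [hent]
            have he : (Real.sqrt (m/μ) * S χ i ℓ)^2 = (m/μ) * (S χ i ℓ)^2 := by
              rw [mul_pow, Real.sq_sqrt (by positivity)]
            rw [he]
            have ht2 : (t i)^2 = κ/m * Θ i i :=
              Real.sq_sqrt (by have := hΘd i; positivity)
            have h2 : (S χ i ℓ)^2 ≤ κ/m * Θ i i := by
              have h3 := hχ i ℓ
              nlinarith [abs_nonneg (S χ i ℓ), sq_abs (S χ i ℓ)]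
            calc (m/μ) * (S χ i ℓ)^2 ≤ (m/μ) * (κ/m * Θ i i) :=
                  mul_le_mul_of_nonneg_left h2 (by positivity)
              _ = (κ/μ) * Θ i i := by field_simp
          calc z i * (Hχ χ i ℓ)^2 ≤ z i * ((κ/μ) * Θ i i) :=
                mul_le_mul_of_nonneg_left h1 (hZnonneg z hz i)
            _ = (κ/μ) * (z i * Θ i i) := by ring
        have hcont : Continuous fun z : Fin m → ℝ => z ⬝ᵥ (fun i => Θ i i) := by
          simp only [dotProduct]
          exact continuous_finset_sum _ fun i _ => (continuous_apply i).mul continuous_const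
        have hsup : z ⬝ᵥ (fun i => Θ i i) ≤ suppFn Z (fun i => Θ i i) :=
          le_csSup (hZcomp.image hcont).bddAbove ⟨z, hz, rfl⟩
        have hφ1 : (κ/μ) * suppFn Z (fun i => Θ i i) ≤ 1 := by
          rw [div_mul_eq_mul_div, div_le_one hμ]; exact hκΘμ
        calc (fun z => z ⬝ᵥ (fun i => (Hχ χ i ℓ)^2)) z
            ≤ (κ/μ) * (z ⬝ᵥ fun i => Θ i i) := hzr
          _ ≤ (κ/μ) * suppFn Z (fun i => Θ i i) :=
              mul_le_mul_of_nonneg_left hsup (by positivity)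
          _ ≤ 1 := hφ1
      calc Real.sqrt (suppFn Z fun i => (Hχ χ i ℓ)^2) ≤ Real.sqrt 1 :=
            Real.sqrt_le_sqrt hle
        _ = 1 := Real.sqrt_one
    set G := {χ : Fin m → Bool |
      ∀ ℓ : Fin m, Real.sqrt (suppFn Z fun i => (Hχ χ i ℓ)^2) ≤ 1} with hGdef
    set B : Fin m → Fin m → Set (Fin m → Bool) :=
      fun i ℓ => {χ | t i < |S χ i ℓ|} with hBdef
    have hGc : Gᶜ ⊆ ⋃ i, ⋃ ℓ, B i ℓ := by
      intro χ hχ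
      by_contra hn
      apply hχ
      simp only [Set.mem_iUnion, not_exists] at hn
      apply hEG
      intro i ℓ
      have := hn i ℓ
      simp only [hBdef, Set.mem_setOf_eq, not_lt] at this
      exact this
    -- per-pair cardinality bound
    have hPB : ∀ i ℓ, ((Set.toFinite (B i ℓ)).toFinset.card : ℝ) ≤
        2^m * (2 * Real.exp (-(κ/4))) := by
      intro i ℓ
      by_cases hΘi : Θ i i = 0
      · have hQ0 : ∀ k, Q i k = 0 := by
          intro k
          have h := (hdiagQ i).symm
          rw [hΘi] at h
          have := (Finset.sum_eq_zero_iff_of_nonneg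
            (fun k _ => sq_nonneg (Q i k))).1 h k (Finset.mem_univ k)
          exact pow_eq_zero_iff two_ne_zero |>.1 this
        have hBempty : B i ℓ = ∅ := by
          ext χ
          simp only [hBdef, Set.mem_setOf_eq, Set.mem_empty_iff_false, iff_false, not_lt]
          have hS0 : S χ i ℓ = 0 := by
            rw [hSdef]
            apply Finset.sum_eq_zero
            intro k _
            rw [hQ0 k]; ring
          rw [hS0, abs_zero, htdef]
          positivity
        rw [hBempty]
        simp only [Set.toFinite_toFinset]
        simp
        positivity
      · have hΘipos : 0 < Θ i i := lt_of_le_of_ne (hΘd i) (Ne.symm hΘi)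
        have hv : 0 < 2/m * Θ i i := by positivity
        have hav : ∑ k, (Q i k * V k ℓ)^2 ≤ 2/m * Θ i i := by
          calc ∑ k, (Q i k * V k ℓ)^2 ≤ ∑ k, (Q i k)^2 * (2/m) := by
                apply Finset.sum_le_sum
                intro k _
                rw [mul_pow]
                apply mul_le_mul_of_nonneg_left ?_ (sq_nonneg _)
                have h1 := hV_ent k ℓ
                nlinarith [Real.sq_sqrt (show (0:ℝ) ≤ 2/m by positivity),
                  abs_nonneg (V k ℓ), sq_abs (V k ℓ)]
            _ = 2/m * Θ i i := by
                rw [hdiagQ i, ← Finset.sum_mul]; ring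
        have hcount := count_two_sided m (fun k => Q i k * V k ℓ) (t i) (2/m * Θ i i)
          (Real.sqrt_nonneg _) hv hav
        have ht2 : (t i)^2 = κ/m * Θ i i := Real.sq_sqrt (by positivity)
        have hexp : -((t i)^2 / (2 * (2/m * Θ i i))) = -(κ/4) := by
          rw [ht2]
          field_simp
          ring
        rw [hexp] at hcount
        have hBf : (Set.toFinite (B i ℓ)).toFinset =
            Finset.univ.filter fun χ : Fin m → Bool =>
              t i < |∑ k, (Q i k * V k ℓ) * (if χ k then 1 else -1)| := by
          ext χ
          simp [Set.Finite.mem_toFinset, hBdef, hSdef]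
        rw [hBf]
        exact hcount
    obtain ⟨Ntot, hNtotdef⟩ : ∃ n : ℕ,
        n = ∑ i, ∑ ℓ, (Set.toFinite (B i ℓ)).toFinset.card := ⟨_, rfl⟩
    -- numeric bound : 4 m² ≤ exp (κ/4)
    have hcpos : (0:ℝ) < 2 * Real.sqrt 3 * m ^ 2 := by linarith
    have hEexp : 4 * (m:ℝ)^2 ≤ Real.exp (κ/4) := by
      have hsq : Real.exp (κ/4) ^ 2 = (2 * Real.sqrt 3 * m ^ 2) ^ 3 := by
        rw [← Real.exp_nat_mul]
        have : ((2:ℕ):ℝ) * (κ/4) = 3 * Real.log (2 * Real.sqrt 3 * m ^ 2) := by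
          rw [hκ]; push_cast; ring
        rw [this, show (3:ℝ) * Real.log (2 * Real.sqrt 3 * m ^ 2) =
          ((3:ℕ):ℝ) * Real.log (2 * Real.sqrt 3 * m ^ 2) by push_cast; ring,
          Real.exp_nat_mul, Real.exp_log hcpos]
      have hs3sq : Real.sqrt 3 ^ 2 = 3 := Real.sq_sqrt (by norm_num)
      have hm46 : (m:ℝ)^4 ≤ (m:ℝ)^6 := pow_le_pow_right₀ hm1 (by norm_num)
      have hsm : 0 ≤ (Real.sqrt 3 - 1) * (m:ℝ)^6 :=
        mul_nonneg (by linarith) (by positivity)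
      have h1 : (4*(m:ℝ)^2)^2 ≤ Real.exp (κ/4)^2 := by nlinarith [hsq, hs3sq, hs3, hm1]
      nlinarith [h1, Real.exp_pos (κ/4), sq_nonneg ((m:ℝ))]
    have hnum : (m:ℝ)^2 * (2 * Real.exp (-(κ/4))) ≤ 1/2 := by
      have hEpos := Real.exp_pos (κ/4)
      rw [Real.exp_neg]
      rw [show (m:ℝ)^2 * (2 * (Real.exp (κ/4))⁻¹) = 2*(m:ℝ)^2 / Real.exp (κ/4) by
        field_simp]
      rw [div_le_div_iff₀ hEpos (by norm_num : (0:ℝ) < 2)]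
      linarith only [hEexp]
    have hNr : (Ntot:ℝ) ≤ (m:ℝ)^2 * (2^m * (2 * Real.exp (-(κ/4)))) := by
      rw [hNtotdef]
      push_cast
      calc ∑ i, ∑ ℓ, ((Set.toFinite (B i ℓ)).toFinset.card : ℝ)
          ≤ ∑ _i : Fin m, ∑ _ℓ : Fin m, 2^m * (2 * Real.exp (-(κ/4))) :=
            Finset.sum_le_sum fun i _ => Finset.sum_le_sum fun ℓ _ => hPB i ℓ
        _ = (m:ℝ)^2 * (2^m * (2 * Real.exp (-(κ/4)))) := by
            simp only [Finset.sum_const, Finset.card_univ, Fintype.card_fin,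
              nsmul_eq_mul]
            ring
    have hNat : 2 * Ntot ≤ 2^m := by
      have h2m : (0:ℝ) ≤ 2^m := by positivity
      have hr : (2 * Ntot : ℝ) ≤ (2^m : ℝ) := by
        have h1 : (Ntot:ℝ) ≤ (2:ℝ)^m * ((m:ℝ)^2 * (2 * Real.exp (-(κ/4)))) := by
          calc (Ntot:ℝ) ≤ (m:ℝ)^2 * (2^m * (2 * Real.exp (-(κ/4)))) := hNr
            _ = (2:ℝ)^m * ((m:ℝ)^2 * (2 * Real.exp (-(κ/4)))) := by ring
        have h2 : (2:ℝ)^m * ((m:ℝ)^2 * (2 * Real.exp (-(κ/4)))) ≤ (2:ℝ)^m * (1/2) :=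
          mul_le_mul_of_nonneg_left hnum h2m
        linarith only [h1, h2]
      exact_mod_cast hr
    -- assemble in ℝ≥0∞
    have h2m0 : ((2:ℝ≥0∞)^m) ≠ 0 := pow_ne_zero _ two_ne_zero
    have h2mt : ((2:ℝ≥0∞)^m) ≠ ⊤ := ENNReal.pow_ne_top ENNReal.ofNat_ne_top
    set P : Measure (Fin m → Bool) :=
      Measure.pi fun _ : Fin m => (PMF.uniformOfFintype Bool).toMeasure with hPdef
    have hPGc : P Gᶜ ≤ 2⁻¹ := by
      have hchain : P Gᶜ ≤ (Ntot : ℝ≥0∞) * (2:ℝ≥0∞)⁻¹ ^ m := by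
        calc P Gᶜ ≤ P (⋃ i, ⋃ ℓ, B i ℓ) := measure_mono hGc
          _ ≤ ∑ i, P (⋃ ℓ, B i ℓ) := measure_iUnion_fintype_le _ _
          _ ≤ ∑ i, ∑ ℓ, P (B i ℓ) :=
              Finset.sum_le_sum fun i _ => measure_iUnion_fintype_le _ _
          _ = ∑ i, ∑ ℓ, ((Set.toFinite (B i ℓ)).toFinset.card : ℝ≥0∞) * (2:ℝ≥0∞)⁻¹ ^ m := by
              simp_rw [hPdef, pi_uniform_count]
          _ = (Ntot : ℝ≥0∞) * (2:ℝ≥0∞)⁻¹ ^ m := by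
              rw [hNtotdef]
              push_cast
              rw [Finset.sum_mul]
              apply Finset.sum_congr rfl
              intro i _
              rw [Finset.sum_mul]
      have hN : (Ntot : ℝ≥0∞) ≤ 2^m * 2⁻¹ := by
        have h1 : (Ntot : ℝ≥0∞) * 2 ≤ 2^m := by
          have h : ((2 * Ntot : ℕ) : ℝ≥0∞) ≤ ((2^m : ℕ) : ℝ≥0∞) := Nat.cast_le.2 hNat
          push_cast at h
          calc (Ntot : ℝ≥0∞) * 2 = 2 * Ntot := by ring
            _ ≤ 2^m := h
        calc (Ntot:ℝ≥0∞) = Ntot * (2 * 2⁻¹) := by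
              rw [ENNReal.mul_inv_cancel two_ne_zero ENNReal.ofNat_ne_top, mul_one]
          _ = (Ntot * 2) * 2⁻¹ := by ring
          _ ≤ 2^m * 2⁻¹ := mul_le_mul_left h1 _
      calc P Gᶜ ≤ (Ntot : ℝ≥0∞) * (2:ℝ≥0∞)⁻¹ ^ m := hchain
        _ ≤ (2^m * 2⁻¹) * (2:ℝ≥0∞)⁻¹ ^ m := mul_le_mul_left hN _
        _ = 2⁻¹ * (2^m * ((2:ℝ≥0∞)^m)⁻¹) := by rw [← ENNReal.inv_pow]; ring
        _ = 2⁻¹ := by rw [ENNReal.mul_inv_cancel h2m0 h2mt, mul_one]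
    have hunion : (1:ℝ≥0∞) ≤ P G + P Gᶜ := by
      have h := measure_union_le (μ := P) G Gᶜ
      rwa [Set.union_compl_self, measure_univ] at h
    have h' : (1:ℝ≥0∞) ≤ P G + 2⁻¹ := hunion.trans (add_le_add_right hPGc _)
    have hfin : (1:ℝ≥0∞) - 2⁻¹ ≤ P G := tsub_le_iff_right.mpr h'
    rw [ENNReal.one_sub_inv_two] at hfin
    rw [one_div]
    exact hfin
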